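/- arXiv:1108.4171 — 2 statements merged into one kernel-verified Lean document; each statement's English description precedes it below -/
import Mathlib

section
/- Let g be a finite-dimensional semisimple Lie algebra over an algebraically closed field of characteristic 0, and let (e,h,f) be an sl_2-triple in g. Then g = [e,g] ⊕ z_g(f), i.e., the Slodowy slice e + z_g(f) is transverse to the adjoint orbit of e at the point e. -/
open LieAlgebra

open LieAlgebra Module Set Function

attribute [local instance 100] LieRing.ofAssociativeRing

section Aux

variable {K : Type*} [Field K]

/-- Component extraction along a generalized eigenspace decomposition. -/
lemma slodowy_extract_component [IsAlgClosed K]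
    {V V' : Type*} [AddCommGroup V] [Module K V] [FiniteDimensional K V]
    [AddCommGroup V'] [Module K V'] [FiniteDimensional K V']
    (A : Module.End K V) (A' : Module.End K V') (B : V' →ₗ[K] V) (σ : K → K)
    (hσ : Function.Injective σ)
    (hmaps : ∀ μ, MapsTo B (A'.maxGenEigenspace μ) (A.maxGenEigenspace (σ μ)))
    {w : V} {c : K} (hw : w ∈ A.maxGenEigenspace (σ c)) (hy : w ∈ LinearMap.range B) :
    ∃ y ∈ A'.maxGenEigenspace c, B y = w := by
  classical
  obtain ⟨y, rfl⟩ := hy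
  have hy' : y ∈ ⨆ μ, A'.maxGenEigenspace μ := by
    rw [Module.End.iSup_maxGenEigenspace_eq_top]; trivial
  rw [Submodule.mem_iSup_iff_exists_finsupp] at hy'
  obtain ⟨fy, hfy, hsum⟩ := hy'
  have h1 : ∀ μ, B (fy μ) ∈ A.maxGenEigenspace (σ μ) := fun μ => hmaps μ (hfy μ)
  have hexp : B y = ∑ μ ∈ fy.support, B (fy μ) := by
    rw [← hsum, map_finsuppSum]; rfl
  have h2 : B y - B (fy c) ∈ ⨆ (ν) (_ : ν ≠ σ c), A.maxGenEigenspace ν := by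
    have hstep : B y - B (fy c) = ∑ μ ∈ fy.support.erase c, B (fy μ) := by
      by_cases hc : c ∈ fy.support
      · rw [hexp, ← Finset.add_sum_erase _ _ hc]; abel
      · rw [Finset.erase_eq_of_notMem hc, Finsupp.notMem_support_iff.mp hc, map_zero,
          sub_zero, hexp]
    rw [hstep]
    refine Submodule.sum_mem _ fun μ hμ => ?_
    have hne : σ μ ≠ σ c := fun hh => (Finset.ne_of_mem_erase hμ) (hσ hh)
    exact Submodule.mem_iSup_of_mem (σ μ) (Submodule.mem_iSup_of_mem hne (h1 μ))
  have h3 : B y - B (fy c) ∈ A.maxGenEigenspace (σ c) := sub_mem hw (h1 c)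
  have h5 : B y - B (fy c) = 0 := by
    have := (Module.End.independent_maxGenEigenspace A (σ c)).le_bot ⟨h3, h2⟩
    simpa using this
  exact ⟨fy c, hfy c, (sub_eq_zero.mp h5).symm⟩

variable {A : Type*} [Ring A] [Algebra K A]

lemma slodowy_cas_comm_e (E F H : A)
    (hHE : H*E = E*H + (2:K)•E) (hHF : H*F = F*H - (2:K)•F) (hEF : E*F = F*E + H) :
    ((4:K)•(F*E) + H*H + (2:K)•H) * E = E * ((4:K)•(F*E) + H*H + (2:K)•H) := by
  have r1 : ∀ X : A, H*(E*X) = E*(H*X) + (2:K)•(E*X) := fun X => by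
    rw [← mul_assoc, hHE, add_mul, smul_mul_assoc, mul_assoc]
  have r2 : ∀ X : A, H*(F*X) = F*(H*X) - (2:K)•(F*X) := fun X => by
    rw [← mul_assoc, hHF, sub_mul, smul_mul_assoc, mul_assoc]
  have r3 : ∀ X : A, E*(F*X) = F*(E*X) + H*X := fun X => by
    rw [← mul_assoc, hEF, add_mul, mul_assoc]
  simp only [add_mul, sub_mul, mul_sub, smul_mul_assoc, mul_add, mul_smul_comm, mul_assoc,
    hHE, hHF, hEF, r1, r2, r3, smul_add, smul_sub, smul_smul]
  abel_nf
  try module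

lemma slodowy_cas_comm_f (E F H : A)
    (hHE : H*E = E*H + (2:K)•E) (hHF : H*F = F*H - (2:K)•F) (hEF : E*F = F*E + H) :
    ((4:K)•(F*E) + H*H + (2:K)•H) * F = F * ((4:K)•(F*E) + H*H + (2:K)•H) := by
  have r1 : ∀ X : A, H*(E*X) = E*(H*X) + (2:K)•(E*X) := fun X => by
    rw [← mul_assoc, hHE, add_mul, smul_mul_assoc, mul_assoc]
  have r2 : ∀ X : A, H*(F*X) = F*(H*X) - (2:K)•(F*X) := fun X => by
    rw [← mul_assoc, hHF, sub_mul, smul_mul_assoc, mul_assoc]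
  have r3 : ∀ X : A, E*(F*X) = F*(E*X) + H*X := fun X => by
    rw [← mul_assoc, hEF, add_mul, mul_assoc]
  simp only [add_mul, sub_mul, mul_sub, smul_mul_assoc, mul_add, mul_smul_comm, mul_assoc,
    hHE, hHF, hEF, r1, r2, r3, smul_add, smul_sub, smul_smul]
  abel_nf
  try module

lemma slodowy_cas_comm_h (E F H : A)
    (hHE : H*E = E*H + (2:K)•E) (hHF : H*F = F*H - (2:K)•F) :
    ((4:K)•(F*E) + H*H + (2:K)•H) * H = H * ((4:K)•(F*E) + H*H + (2:K)•H) := by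
  have r1 : ∀ X : A, H*(E*X) = E*(H*X) + (2:K)•(E*X) := fun X => by
    rw [← mul_assoc, hHE, add_mul, smul_mul_assoc, mul_assoc]
  have r2 : ∀ X : A, H*(F*X) = F*(H*X) - (2:K)•(F*X) := fun X => by
    rw [← mul_assoc, hHF, sub_mul, smul_mul_assoc, mul_assoc]
  simp only [add_mul, sub_mul, mul_sub, smul_mul_assoc, mul_add, mul_smul_comm, mul_assoc,
    hHE, hHF, r1, r2, smul_add, smul_sub, smul_smul]
  abel_nf
  try module

end Aux

section Main

variable {K L : Type*} [Field K] [IsAlgClosed K] [CharZero K]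
  [LieRing L] [LieAlgebra K L] [FiniteDimensional K L]

/-- The key disjointness: for an sl2 triple, `im (ad e) ∩ ker (ad f) = 0`. -/
lemma slodowy_disjoint {h e f : L} (ht : IsSl2Triple h e f) :
    Disjoint (LinearMap.range (ad K L e)) (LinearMap.ker (ad K L f)) := by
  set E : Module.End K L := ad K L e with hE
  set F : Module.End K L := ad K L f with hF
  set H : Module.End K L := ad K L h with hH
  -- operator relations
  have hHE : H*E = E*H + (2:K)•E := by
    have h1 := LieHom.map_lie (ad K L) h e
    rw [ht.lie_h_e_smul K, map_smul, Ring.lie_def] at h1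
    rw [← hE, ← hH] at h1
    rw [h1]; abel
  have hHF : H*F = F*H - (2:K)•F := by
    have h1 := LieHom.map_lie (ad K L) h f
    rw [ht.lie_lie_smul_f K, map_neg, map_smul, Ring.lie_def,
      neg_eq_iff_eq_neg] at h1
    rw [← hF, ← hH] at h1
    rw [h1]; abel
  have hEF : E*F = F*E + H := by
    have h1 := LieHom.map_lie (ad K L) e f
    rw [ht.lie_e_f, Ring.lie_def] at h1
    rw [← hE, ← hF, ← hH] at h1
    rw [h1]; abel
  -- pointwise versions
  have pHE : ∀ v : L, H (E v) = E (H v) + (2:K) • E v := fun v => by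
    have := congrArg (fun T : Module.End K L => T v) hHE
    simpa [Module.End.mul_apply] using this
  have pHF : ∀ v : L, H (F v) = F (H v) - (2:K) • F v := fun v => by
    have := congrArg (fun T : Module.End K L => T v) hHF
    simpa [Module.End.mul_apply] using this
  have pEF : ∀ v : L, E (F v) = F (E v) + H v := fun v => by
    have := congrArg (fun T : Module.End K L => T v) hEF
    simpa [Module.End.mul_apply] using this
  rw [Submodule.disjoint_def]
  by_contra hcon
  push_neg at hcon
  obtain ⟨x, hxE, hxF, hx0⟩ := hcon
  -- the intersection is H-stable
  set W : Submodule K L := LinearMap.range E ⊓ LinearMap.ker F with hWdef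
  have hWstable : ∀ v ∈ W, H v ∈ W := by
    rintro v hv
    obtain ⟨hv1, hv2⟩ := Submodule.mem_inf.mp hv
    refine Submodule.mem_inf.mpr ⟨?_, ?_⟩
    · obtain ⟨u, rfl⟩ := hv1
      exact ⟨H u + (2:K) • u, by rw [map_add, map_smul, pHE]⟩
    · rw [LinearMap.mem_ker] at hv2 ⊢
      have h3 := pHF v
      rw [hv2, map_zero, smul_zero, sub_zero] at h3
      exact h3.symm
  -- an eigenvector of H in W
  have hWnt : Nontrivial W :=
    nontrivial_of_ne ⟨x, Submodule.mem_inf.mpr ⟨hxE, hxF⟩⟩ 0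
      (fun hh => hx0 (by simpa using congrArg Subtype.val hh))
  obtain ⟨lam, hlam⟩ := Module.End.exists_eigenvalue (H.restrict hWstable)
  obtain ⟨w, hweig⟩ := hlam.exists_hasEigenvector
  set w0 : L := (w : L) with hw0def
  have hw0 : H w0 = lam • w0 := by
    have := congrArg Subtype.val hweig.apply_eq_smul
    simpa [LinearMap.restrict_apply] using this
  have hw0ne : w0 ≠ 0 := fun hh => hweig.2 (Subtype.ext hh)
  have hw0range : w0 ∈ LinearMap.range E := (Submodule.mem_inf.mp w.2).1
  have hw0ker : F w0 = 0 := (Submodule.mem_inf.mp w.2).2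
  -- the eigenvalue is a nonpositive integer
  have prim : IsSl2Triple.HasPrimitiveVectorWith ht.symm w0 (-lam) :=
    { ne_zero := hw0ne
      lie_h := by
        rw [neg_lie]
        have hb : ⁅h, w0⁆ = lam • w0 := hw0
        rw [hb, neg_smul]
      lie_e := hw0ker }
  obtain ⟨m, hm⟩ := prim.exists_nat
  have hlam' : lam = -(m:K) := by rw [← hm]; ring
  -- Casimir operator
  set Cas : Module.End K L := (4:K)•(F*E) + H*H + (2:K)•H with hCas
  have hCE : Cas * E = E * Cas := slodowy_cas_comm_e E F H hHE hHF hEF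
  have hCF : Cas * F = F * Cas := slodowy_cas_comm_f E F H hHE hHF hEF
  have hCH : Cas * H = H * Cas := slodowy_cas_comm_h E F H hHE hHF
  have casApply : ∀ (v : L) (μ : K), F v = 0 → H v = μ • v →
      Cas v = (μ^2 - 2*μ) • v := by
    intro v μ hFv hHv
    have hFE : F (E v) = -(μ • v) := by
      have h0 := pEF v
      rw [hFv, map_zero, hHv] at h0
      exact eq_neg_of_add_eq_zero_left h0.symm
    have hCv : Cas v = (4:K) • (F (E v)) + H (H v) + (2:K) • (H v) := by
      simp [hCas, Module.End.mul_apply]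
    rw [hCv, hFE, hHv, map_smul, hHv]
    module
  set c' : K := lam^2 - 2*lam with hc'
  have hw0C : Cas w0 = c' • w0 := casApply w0 lam hw0ker hw0
  have hw0P : w0 ∈ Cas.maxGenEigenspace c' := by
    rw [Module.End.mem_maxGenEigenspace]
    exact ⟨1, by simp [pow_one, LinearMap.sub_apply, hw0C]⟩
  -- Claim 3: maxGen H (lam - 2) ∩ maxGen Cas c' = 0
  have claim3 : ∀ z : L, z ∈ H.maxGenEigenspace (lam - 2) →
      z ∈ Cas.maxGenEigenspace c' → z = 0 := by
    intro z hzQ hzP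
    by_contra hz0
    set P := Cas.maxGenEigenspace c' with hPdef
    have hPH : MapsTo H P P :=
      Module.End.mapsTo_maxGenEigenspace_of_comm hCH c'
    have hPF : MapsTo F P P :=
      Module.End.mapsTo_maxGenEigenspace_of_comm hCF c'
    set S : Module.End K L := H - (lam - 2) • 1 with hSdef
    have hSP : ∀ (n : ℕ) (v : L), v ∈ P → (S^n) v ∈ P := by
      intro n
      induction n with
      | zero => intro v hv; simpa using hv
      | succ n ih =>
        intro v hv
        rw [pow_succ, Module.End.mul_apply]
        refine ih _ ?_
        rw [hSdef]
        simp only [LinearMap.sub_apply, LinearMap.smul_apply, Module.End.one_apply]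
        exact sub_mem (hPH hv) (Submodule.smul_mem _ _ hv)
    obtain ⟨k, hk⟩ := (Module.End.mem_maxGenEigenspace _ _ _).mp hzQ
    obtain ⟨a, ha1, ha2⟩ :=
      Nat.exists_not_and_succ_of_not_zero_of_exists (p := fun n => (S^n) z = 0)
        (by simpa using hz0) ⟨k, hk⟩
    set z' : L := (S^a) z with hz'def
    have hz'P : z' ∈ P := hSP a z hzP
    have hz'H : H z' = (lam - 2) • z' := by
      have hzz : S z' = 0 := by
        rw [hz'def, ← Module.End.mul_apply, ← pow_succ']
        exact ha2
      rw [hSdef] at hzz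
      simp only [LinearMap.sub_apply, LinearMap.smul_apply, Module.End.one_apply,
        sub_eq_zero] at hzz
      exact hzz
    -- F-chain from z'
    have hchain : ∀ j : ℕ, H ((F^j) z') = (lam - 2 - 2*j) • ((F^j) z') := by
      intro j
      induction j with
      | zero => simpa using hz'H
      | succ j ih =>
        rw [pow_succ', Module.End.mul_apply, pHF, ih, map_smul,
          ← Module.End.mul_apply F, ← pow_succ']
        push_cast
        module
    have hPj : ∀ j : ℕ, (F^j) z' ∈ P := by
      intro j
      induction j with
      | zero => simpa using hz'P
      | succ j ih =>
        rw [pow_succ', Module.End.mul_apply]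
        exact hPF ih
    have hterm : ∃ j : ℕ, (F^j) z' = 0 := by
      by_contra! hno
      have hinj : Function.Injective (fun j : ℕ => lam - 2 - 2*(j:K)) := by
        intro j1 j2 hh
        simp only at hh
        have h2 : (j1 : K) = j2 := by linear_combination (-(1:K)/2) * hh
        exact_mod_cast h2
      have hli := Module.End.eigenvectors_linearIndependent' H
        (fun j : ℕ => lam - 2 - 2*(j:K)) hinj (fun j => (F^j) z')
        (fun j => ⟨(Module.End.mem_eigenspace_iff).mpr (hchain j), hno j⟩)
      exact Module.Finite.not_linearIndependent_of_infinite _ hli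
    obtain ⟨j0, hj1, hj2⟩ :=
      Nat.exists_not_and_succ_of_not_zero_of_exists (p := fun n => (F^n) z' = 0)
        (by
          simp only [pow_zero, Module.End.one_apply]
          exact ha1) hterm
    -- the lowest vector u
    set ν : K := lam - 2 - 2*(j0:K) with hν
    set u : L := (F^j0) z' with hudef
    have hune : u ≠ 0 := hj1
    have huF : F u = 0 := by
      rw [hudef, ← Module.End.mul_apply, ← pow_succ']
      exact hj2
    have huH : H u = ν • u := hchain j0
    obtain ⟨N, hN⟩ := (Module.End.mem_maxGenEigenspace _ _ _).mp (hPj j0)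
    have hstepN : ∀ n : ℕ, ((Cas - c' • 1)^n) u = ((ν^2 - 2*ν) - c')^n • u := by
      intro n
      induction n with
      | zero => simp
      | succ n ih =>
        have hCasu : (Cas - c' • 1) u = (ν^2 - 2*ν - c') • u := by
          rw [LinearMap.sub_apply, LinearMap.smul_apply, Module.End.one_apply,
            casApply u ν huF huH, ← sub_smul]
        conv_lhs => rw [pow_succ]
        rw [Module.End.mul_apply, hCasu, map_smul, ih, smul_smul]
        congr 1
        ring
    have hsc : ((ν^2 - 2*ν) - c')^N • u = (0:L) := by rw [← hstepN N]; exact hN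
    have hveq : ν^2 - 2*ν = c' := by
      rcases smul_eq_zero.mp hsc with hh | hh
      · exact sub_eq_zero.mp (pow_eq_zero_iff'.mp hh).1
      · exact absurd hh hune
    have hfac : (ν - lam) * (ν + lam - 2) = 0 := by
      rw [hc'] at hveq
      linear_combination hveq
    rcases mul_eq_zero.mp hfac with h1 | h2
    · have hc1 : ((2 + 2*j0 : ℕ) : K) = 0 := by
        rw [hν] at h1
        push_cast
        linear_combination -h1
      have := Nat.cast_eq_zero.mp hc1
      omega
    · have hc2 : ((2*m + 2*j0 + 4 : ℕ) : K) = 0 := by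
        rw [hν] at h2
        rw [hlam'] at h2
        push_cast
        linear_combination -h2
      have := Nat.cast_eq_zero.mp hc2
      omega
  -- Extraction, step 1 : w0 = E y₁ with y₁ ∈ maxGen H (lam - 2)
  have hsemi : ∀ μ : K, SemiconjBy E (H - μ • 1) (H - (μ+2) • 1) := by
    intro μ
    rw [SemiconjBy, mul_sub, sub_mul, hHE, mul_smul_comm, smul_mul_assoc, mul_one, one_mul,
      add_smul]
    abel
  have hmapsE : ∀ μ, MapsTo E (H.maxGenEigenspace μ) (H.maxGenEigenspace (μ+2)) := by
    intro μ v hv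
    obtain ⟨k, hk⟩ := (Module.End.mem_maxGenEigenspace _ _ _).mp hv
    refine (Module.End.mem_maxGenEigenspace _ _ _).mpr ⟨k, ?_⟩
    have hsk := (hsemi μ).pow_right k
    have happ := congrArg (fun T : Module.End K L => T v) hsk
    simp only [Module.End.mul_apply] at happ
    rw [hk, map_zero] at happ
    exact happ.symm
  obtain ⟨y₁, hy₁Q, hy₁⟩ := slodowy_extract_component H H E (fun μ => μ + 2)
      (add_left_injective 2) hmapsE (c := lam - 2)
      (by
        have hmem : w0 ∈ H.maxGenEigenspace lam := by
          rw [Module.End.mem_maxGenEigenspace]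
          exact ⟨1, by simp [pow_one, LinearMap.sub_apply, hw0]⟩
        simpa [show lam - 2 + 2 = lam from by ring] using hmem) hw0range
  -- Extraction, step 2 : within Q, extract the Casimir component
  set Q : Submodule K L := H.maxGenEigenspace (lam - 2) with hQdef
  have hQmapsTo : ∀ v ∈ Q, Cas v ∈ Q := fun v hv =>
    Module.End.mapsTo_maxGenEigenspace_of_comm hCH.symm (lam - 2) hv
  set CasQ : Module.End K Q := Cas.restrict hQmapsTo with hCasQdef
  have hrest : ∀ μ : K, CasQ.maxGenEigenspace μ
      = Submodule.comap Q.subtype (Cas.maxGenEigenspace μ) := fun μ =>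
    Module.End.genEigenspace_restrict Cas Q ⊤ μ hQmapsTo
  have hmaps2 : ∀ μ, MapsTo (E ∘ₗ Q.subtype)
      (CasQ.maxGenEigenspace μ) (Cas.maxGenEigenspace μ) := by
    intro μ zz hzz
    rw [SetLike.mem_coe, hrest μ, Submodule.mem_comap] at hzz
    have := Module.End.mapsTo_maxGenEigenspace_of_comm hCE μ hzz
    simpa using this
  obtain ⟨y₂, hy₂P, hy₂⟩ := slodowy_extract_component Cas CasQ (E ∘ₗ Q.subtype) id
      Function.injective_id hmaps2 (c := c') (by simpa using hw0P)
      ⟨⟨y₁, hy₁Q⟩, by simpa using hy₁⟩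
  have hy₂0 : (y₂ : L) = 0 := by
    refine claim3 _ y₂.2 ?_
    rw [hrest c'] at hy₂P
    exact hy₂P
  refine hw0ne ?_
  rw [← hy₂]
  simp [hy₂0]

end Main

/-- For an `sl₂`-triple `(e,h,f)` in a semisimple Lie algebra over an algebraically closed
field of characteristic zero, `g = [e,g] ⊕ z_g(f)`: the Slodowy slice `e + z_g(f)` is
transverse to the adjoint orbit of `e` at `e`. -/
theorem slodowy_slice_transverse
    {K L : Type*} [Field K] [IsAlgClosed K] [CharZero K]
    [LieRing L] [LieAlgebra K L] [FiniteDimensional K L] [LieAlgebra.IsSemisimple K L]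
    {h e f : L} (ht : IsSl2Triple h e f) :
    IsCompl (LinearMap.range ((ad K L e) : L →ₗ[K] L))
      (LinearMap.ker ((ad K L f) : L →ₗ[K] L)) := by
  have d1 := slodowy_disjoint (K := K) ht
  have d2 := slodowy_disjoint (K := K) ht.symm
  have r1 := LinearMap.finrank_range_add_finrank_ker (ad K L e)
  have r2 := LinearMap.finrank_range_add_finrank_ker (ad K L f)
  have s1 : finrank K (LinearMap.range (ad K L e)) + finrank K (LinearMap.ker (ad K L f))
      ≤ finrank K L := by
    have hq := Submodule.finrank_sup_add_finrank_inf_eq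
      (LinearMap.range (ad K L e)) (LinearMap.ker (ad K L f))
    rw [disjoint_iff.mp d1, finrank_bot, add_zero] at hq
    rw [← hq]
    exact Submodule.finrank_le _
  have s2 : finrank K (LinearMap.range (ad K L f)) + finrank K (LinearMap.ker (ad K L e))
      ≤ finrank K L := by
    have hq := Submodule.finrank_sup_add_finrank_inf_eq
      (LinearMap.range (ad K L f)) (LinearMap.ker (ad K L e))
    rw [disjoint_iff.mp d2, finrank_bot, add_zero] at hq
    rw [← hq]
    exact Submodule.finrank_le _
  have key : finrank K (LinearMap.range (ad K L e))
      + finrank K (LinearMap.ker (ad K L f)) = finrank K L := by omega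
  refine ⟨d1, ?_⟩
  rw [codisjoint_iff]
  have hq := Submodule.finrank_sup_add_finrank_inf_eq
    (LinearMap.range (ad K L e)) (LinearMap.ker (ad K L f))
  rw [disjoint_iff.mp d1, finrank_bot, add_zero] at hq
  exact Submodule.eq_top_of_finrank_eq (by rw [hq, key])
end

section
/- Let B be a commutative Noetherian ring. Then B is a normal domain if and only if the formal power series ring B[[x]] is a normal domain. -/
open PowerSeries

theorem auxPS_fg_of_le {R M : Type*} [CommRing R] [IsNoetherianRing R] [AddCommGroup M]
    [Module R M] {N P : Submodule R M} (hNP : N ≤ P) (hP : P.FG) : N.FG := by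
  haveI : IsNoetherian R P := isNoetherian_of_fg_of_noetherian P hP
  have h1 : (N.comap P.subtype).FG := IsNoetherian.noetherian _
  have h2 := h1.map P.subtype
  rwa [Submodule.map_comap_subtype, inf_eq_right.mpr hNP] at h2

/-- Almost integral elements over a Noetherian integrally closed domain are in the ring. -/

theorem auxPS_almost_integral {R F : Type*} [CommRing R] [IsDomain R] [IsNoetherianRing R]
    [IsIntegrallyClosed R] [Field F] [Algebra R F] [IsFractionRing R F]
    (z : F) (d : R) (hd : d ≠ 0)
    (h : ∀ n : ℕ, ∃ c, algebraMap R F c = algebraMap R F d * z ^ n) :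
    ∃ w, algebraMap R F w = z := by
  have hdF : algebraMap R F d ≠ 0 := fun h0 =>
    hd (IsFractionRing.injective R F (by simpa using h0))
  set u : F := (algebraMap R F d)⁻¹ with hu
  have hz : ∀ n : ℕ, z ^ n ∈ Submodule.span R {u} := by
    intro n
    obtain ⟨c, hc⟩ := h n
    have hzu : z ^ n = c • u := by
      rw [Algebra.smul_def, hc, hu, mul_comm (algebraMap R F d), mul_assoc,
        mul_inv_cancel₀ hdF, mul_one]
    rw [hzu]
    exact Submodule.smul_mem _ c (Submodule.mem_span_singleton_self u)
  have hle : Subalgebra.toSubmodule (Algebra.adjoin R {z}) ≤ Submodule.span R {u} := by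
    rw [Algebra.adjoin_eq_span, Submodule.span_le]
    rintro x hx
    obtain ⟨n, rfl⟩ := Submonoid.mem_closure_singleton.mp hx
    exact hz n
  have hfg : (Subalgebra.toSubmodule (Algebra.adjoin R {z})).FG :=
    auxPS_fg_of_le hle (Submodule.fg_span_singleton u)
  have hint : IsIntegral R z :=
    IsIntegral.of_mem_of_fg _ hfg _ (Algebra.self_mem_adjoin_singleton R z)
  exact IsIntegrallyClosed.isIntegral_iff.mp hint

theorem auxPS_coeffs {B : Type*} [CommRing B] [IsDomain B] [IsNoetherianRing B]
    [IsIntegrallyClosed B] {K : Type*} [Field K] [Algebra B K] [IsFractionRing B K]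
    (d : PowerSeries B) (hd : d ≠ 0)
    (F : PowerSeries K)
    (h : ∀ n : ℕ, ∃ c : PowerSeries B,
      PowerSeries.map (algebraMap B K) c =
        PowerSeries.map (algebraMap B K) d * F ^ n) :
    ∀ k : ℕ, ∃ b : B, algebraMap B K b = PowerSeries.coeff k F := by
  set ψ : PowerSeries B →+* PowerSeries K := PowerSeries.map (algebraMap B K) with hψdef
  have hex : ∃ n, PowerSeries.coeff n d ≠ 0 := by
    by_contra hall
    push_neg at hall
    exact hd (PowerSeries.ext fun n => by rw [hall n, map_zero])
  classical
  set m := Nat.find hex with hmdef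
  have hm : PowerSeries.coeff m d ≠ 0 := Nat.find_spec hex
  have hmin : ∀ i < m, PowerSeries.coeff i d = 0 := fun i hi =>
    not_not.mp (Nat.find_min hex hi)
  -- Step A: the constant coefficient lies in B.
  have stepA : ∀ G : PowerSeries K, (∀ n : ℕ, ∃ c, ψ c = ψ d * G ^ n) →
      ∃ b : B, algebraMap B K b = PowerSeries.coeff 0 G := by
    intro G hG
    apply auxPS_almost_integral (PowerSeries.coeff 0 G) (PowerSeries.coeff m d) hm
    intro n
    obtain ⟨c, hc⟩ := hG n
    refine ⟨PowerSeries.coeff m c, ?_⟩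
    have hcm : algebraMap B K (PowerSeries.coeff m c) =
        PowerSeries.coeff m (ψ d * G ^ n) := by
      rw [← hc, hψdef, PowerSeries.coeff_map]
    rw [hcm, PowerSeries.coeff_mul, Finset.sum_eq_single (m, 0)]
    · rw [hψdef, PowerSeries.coeff_map]
      congr 1
      simp [PowerSeries.coeff_zero_eq_constantCoeff, map_pow]
    · rintro ⟨i, j⟩ hmem hne
      rw [Finset.HasAntidiagonal.mem_antidiagonal] at hmem
      have hi : i < m := by
        rcases lt_or_ge i m with h' | h'
        · exact h'
        · exfalso; apply hne
          have : i = m := le_antisymm (by omega) h'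
          subst this
          simp [show j = 0 by omega]
      rw [hψdef, PowerSeries.coeff_map, hmin i hi, map_zero, zero_mul]
    · intro hnot
      exact absurd (Finset.HasAntidiagonal.mem_antidiagonal.mpr (by simp)) hnot
  -- Step B: the tail satisfies the same hypothesis.
  have stepB : ∀ G : PowerSeries K, (∀ n : ℕ, ∃ c, ψ c = ψ d * G ^ n) →
      ∀ n : ℕ, ∃ c, ψ c = ψ d * (PowerSeries.mk fun j => PowerSeries.coeff (j + 1) G) ^ n := by
    intro G hG n
    set a := PowerSeries.coeff 0 G with hadef
    obtain ⟨b, hb⟩ := stepA G hG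
    set G' : PowerSeries K := PowerSeries.mk fun j => PowerSeries.coeff (j + 1) G with hG'def
    have hXG' : PowerSeries.X * G' = G - PowerSeries.C a := by
      ext j
      cases j with
      | zero => simp [hG'def, hadef]
      | succ j => simp [hG'def, PowerSeries.coeff_succ_X_mul]
    have hCa : PowerSeries.C a = ψ (PowerSeries.C b) := by
      rw [hψdef, PowerSeries.map_C, hb]
    have hrange : ψ d * (G - PowerSeries.C a) ^ n ∈ ψ.range := by
      rw [sub_eq_add_neg, add_pow, Finset.mul_sum]
      apply Subring.sum_mem
      intro k hk
      obtain ⟨c, hc⟩ := hG k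
      refine ⟨c * (-PowerSeries.C b) ^ (n - k) * (n.choose k : PowerSeries B), ?_⟩
      rw [map_mul, map_mul, map_pow, map_neg, ← hCa, map_natCast, hc]
      ring
    obtain ⟨e, he⟩ := hrange
    have he2 : ψ e = PowerSeries.X ^ n * (ψ d * G' ^ n) := by
      rw [he, ← hXG', mul_pow]
      ring
    refine ⟨PowerSeries.mk fun j => PowerSeries.coeff (j + n) e, ?_⟩
    ext j
    rw [hψdef, PowerSeries.coeff_map, PowerSeries.coeff_mk]
    have : algebraMap B K (PowerSeries.coeff (j + n) e) =
        PowerSeries.coeff (j + n) (ψ e) := by rw [hψdef, PowerSeries.coeff_map]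
    rw [this, he2, PowerSeries.coeff_X_pow_mul]
  -- Main induction
  have main : ∀ k : ℕ, ∃ G : PowerSeries K,
      (∀ j, PowerSeries.coeff j G = PowerSeries.coeff (k + j) F) ∧
      (∀ n : ℕ, ∃ c, ψ c = ψ d * G ^ n) := by
    intro k
    induction k with
    | zero => exact ⟨F, fun j => by rw [Nat.zero_add], h⟩
    | succ k ih =>
      obtain ⟨G, hGF, hG⟩ := ih
      refine ⟨PowerSeries.mk fun j => PowerSeries.coeff (j + 1) G, fun j => ?_, stepB G hG⟩
      rw [PowerSeries.coeff_mk, hGF (j + 1), show k + (j + 1) = k + 1 + j by omega]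
  intro k
  obtain ⟨G, hGF, hG⟩ := main k
  obtain ⟨b, hb⟩ := stepA G hG
  exact ⟨b, by rw [hb, hGF 0, Nat.add_zero]⟩

theorem auxPS_backward {B : Type*} [CommRing B] [IsDomain B]
    [IsIntegrallyClosed (PowerSeries B)] : IsIntegrallyClosed B := by
  set K := FractionRing B
  set L := FractionRing (PowerSeries B)
  have hginj : Function.Injective ((algebraMap (PowerSeries B) L).comp (C (R := B))) :=
    (IsFractionRing.injective (PowerSeries B) L).comp PowerSeries.C_injective
  set φ : K →+* L := IsFractionRing.lift hginj with hφ
  have e1 : ∀ a : B, φ (algebraMap B K a) = algebraMap (PowerSeries B) L (C a) := fun a =>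
    IsFractionRing.lift_algebraMap hginj a
  rw [isIntegrallyClosed_iff K]
  intro x hx
  obtain ⟨p, pm, hp⟩ := hx
  have key : Polynomial.eval₂ (algebraMap (PowerSeries B) L) (φ x) (p.map (C (R := B))) = 0 := by
    rw [Polynomial.eval₂_map]
    have hcomp : (algebraMap (PowerSeries B) L).comp (C (R := B)) = φ.comp (algebraMap B K) := by
      ext b; simp [e1 b]
    rw [hcomp, ← Polynomial.hom_eval₂, hp, map_zero]
  have hyint : IsIntegral (PowerSeries B) (φ x) := ⟨p.map (C (R := B)), pm.map _, key⟩
  obtain ⟨f, hf⟩ := IsIntegrallyClosed.isIntegral_iff.mp hyint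
  obtain ⟨b, c, hc, hbc⟩ := IsFractionRing.div_surjective (A := B) x
  have hcK : algebraMap B K c ≠ 0 := IsFractionRing.to_map_ne_zero_of_mem_nonZeroDivisors hc
  have hcx : algebraMap B K c * x = algebraMap B K b := by
    rw [← hbc]; exact mul_div_cancel₀ _ hcK
  have h2 : C c * f = C b := by
    apply IsFractionRing.injective (PowerSeries B) L
    calc algebraMap (PowerSeries B) L (C c * f)
        = algebraMap (PowerSeries B) L (C c) * φ x := by rw [map_mul, hf]
      _ = φ (algebraMap B K c * x) := by rw [map_mul, e1]
      _ = φ (algebraMap B K b) := by rw [hcx]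
      _ = algebraMap (PowerSeries B) L (C b) := e1 b
  refine ⟨PowerSeries.constantCoeff f, ?_⟩
  have h3 : c * PowerSeries.constantCoeff f = b := by
    have := congrArg (PowerSeries.constantCoeff) h2
    simpa using this
  have h4 : algebraMap B K c * algebraMap B K (PowerSeries.constantCoeff f)
      = algebraMap B K c * x := by
    rw [hcx, ← h3, map_mul]
  exact mul_left_cancel₀ hcK h4

set_option maxHeartbeats 2000000 in
set_option synthInstance.maxHeartbeats 400000 in
theorem auxPS_forward {B : Type*} [CommRing B] [IsDomain B] [IsNoetherianRing B]
    [IsIntegrallyClosed B] : IsIntegrallyClosed (PowerSeries B) := by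
  have hψ : Function.Injective (PowerSeries.map (algebraMap B (FractionRing B))) := by
    intro f g hfg
    ext n
    exact IsFractionRing.injective B (FractionRing B)
      (by simpa [PowerSeries.coeff_map] using congrArg (PowerSeries.coeff n) hfg)
  have hginj : Function.Injective
      ((algebraMap (PowerSeries (FractionRing B)) (FractionRing (PowerSeries (FractionRing B)))).comp
        (PowerSeries.map (algebraMap B (FractionRing B)))) :=
    (IsFractionRing.injective (PowerSeries (FractionRing B))
      (FractionRing (PowerSeries (FractionRing B)))).comp hψ
  set Φ : FractionRing (PowerSeries B) →+* FractionRing (PowerSeries (FractionRing B)) :=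
    IsFractionRing.lift hginj with hΦ
  have hΦalg : ∀ c : PowerSeries B, Φ (algebraMap _ _ c) =
      algebraMap _ _ (PowerSeries.map (algebraMap B (FractionRing B)) c) := fun c =>
    IsFractionRing.lift_algebraMap hginj c
  rw [isIntegrallyClosed_iff (FractionRing (PowerSeries B))]
  intro y hy
  obtain ⟨s, hs⟩ := hy.fg_adjoin_singleton
  obtain ⟨dd, hdd⟩ :=
    IsLocalization.exist_integer_multiples_of_finset (nonZeroDivisors (PowerSeries B)) s
  have hd0 : (dd : PowerSeries B) ≠ 0 := nonZeroDivisors.ne_zero dd.prop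
  have hpow : ∀ n : ℕ, ∃ c : PowerSeries B,
      algebraMap _ (FractionRing (PowerSeries B)) c =
        algebraMap _ _ (dd : PowerSeries B) * y ^ n := by
    have hspan : ∀ z ∈ Submodule.span (PowerSeries B) (s : Set (FractionRing (PowerSeries B))),
        ∃ c : PowerSeries B, algebraMap _ (FractionRing (PowerSeries B)) c =
          algebraMap _ _ (dd : PowerSeries B) * z := by
      intro z hz
      induction hz using Submodule.span_induction with
      | mem w hw =>
        obtain ⟨c, hc⟩ := hdd w hw
        exact ⟨c, by simpa [Algebra.smul_def] using hc⟩
      | zero => exact ⟨0, by simp⟩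
      | add u v _ _ hu hv =>
        obtain ⟨c1, hc1⟩ := hu
        obtain ⟨c2, hc2⟩ := hv
        exact ⟨c1 + c2, by rw [map_add, hc1, hc2, mul_add]⟩
      | smul r u _ hu =>
        obtain ⟨c, hc⟩ := hu
        refine ⟨r * c, ?_⟩
        rw [map_mul, hc, Algebra.smul_def]
        ring
    intro n
    apply hspan
    rw [hs]
    simpa using pow_mem (Algebra.self_mem_adjoin_singleton (PowerSeries B) y) n
  have hF : ∀ n : ℕ, ∃ c : PowerSeries (FractionRing B),
      algebraMap _ (FractionRing (PowerSeries (FractionRing B))) c =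
        algebraMap _ _ (PowerSeries.map (algebraMap B (FractionRing B)) (dd : PowerSeries B))
          * (Φ y) ^ n := by
    intro n
    obtain ⟨c, hc⟩ := hpow n
    refine ⟨PowerSeries.map (algebraMap B (FractionRing B)) c, ?_⟩
    rw [← hΦalg, hc, map_mul, map_pow, hΦalg]
  have hψd0 : PowerSeries.map (algebraMap B (FractionRing B)) (dd : PowerSeries B) ≠ 0 :=
    fun h0 => hd0 (hψ (by rw [h0, map_zero]))
  obtain ⟨F, hF2⟩ := auxPS_almost_integral (Φ y)
    (PowerSeries.map (algebraMap B (FractionRing B)) (dd : PowerSeries B)) hψd0 hF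
  have hDF : ∀ n : ℕ, ∃ c : PowerSeries B,
      PowerSeries.map (algebraMap B (FractionRing B)) c =
        PowerSeries.map (algebraMap B (FractionRing B)) (dd : PowerSeries B) * F ^ n := by
    intro n
    obtain ⟨c, hc⟩ := hpow n
    refine ⟨c, IsFractionRing.injective (PowerSeries (FractionRing B))
      (FractionRing (PowerSeries (FractionRing B))) ?_⟩
    rw [map_mul, map_pow, hF2, ← hΦalg, hc, map_mul, map_pow, hΦalg]
  have hcoeff := auxPS_coeffs (dd : PowerSeries B) hd0 F hDF
  choose g hg using hcoeff
  refine ⟨PowerSeries.mk g, ?_⟩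
  have hψmk : PowerSeries.map (algebraMap B (FractionRing B)) (PowerSeries.mk g) = F := by
    ext n
    rw [PowerSeries.coeff_map, PowerSeries.coeff_mk, hg n]
  apply RingHom.injective Φ
  rw [hΦalg, hψmk, hF2]

/-- A commutative Noetherian ring `B` is a normal domain if and only if the formal power
series ring `B[[x]]` is a normal domain. -/
theorem powerSeries_normal_iff
    {B : Type*} [CommRing B] [IsNoetherianRing B] :
    (IsDomain B ∧ IsIntegrallyClosed B) ↔
      (IsDomain (PowerSeries B) ∧ IsIntegrallyClosed (PowerSeries B)) := by
  constructor
  · rintro ⟨h1, h2⟩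
    exact ⟨inferInstance, auxPS_forward⟩
  · rintro ⟨h1, h2⟩
    have hBdom : IsDomain B := Function.Injective.isDomain (C (R := B)) PowerSeries.C_injective
    exact ⟨hBdom, auxPS_backward⟩
end
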